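/- Let G=(V,E) be a mixed graph and A, B disjoint subsets of V. The following are equivalent: (i) A and B are m-separated given V\(A∪B); (ii) A and B are not connected by any pure-collider path; (iii) district(A ∪ ch(A)) ∩ district(B ∪ ch(B)) = ∅. -/

import Mathlib

structure MixedGraph (V : Type*) where
  dir : V → V → Prop
  bi : V → V → Prop
  bi_symm : ∀ {a b : V}, bi a b → bi b a

namespace MixedGraph

variable {V : Type*}

/-- A single edge traversal: a directed edge traversed forwards (`a → b`),
a directed edge traversed backwards (`a ← b`), or a bi-directed edge (`a ↔ b`). -/
inductive Step (G : MixedGraph V) : V → V → Type _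
  | fwd {a b : V} : G.dir a b → G.Step a b
  | bwd {a b : V} : G.dir b a → G.Step a b
  | bi  {a b : V} : G.bi a b → G.Step a b

/-- The edge has an arrowhead at its second endpoint. -/
def Step.arrowAtEnd {G : MixedGraph V} : {a b : V} → G.Step a b → Prop
  | _, _, .fwd _ => True
  | _, _, .bwd _ => False
  | _, _, .bi _ => True

/-- The edge has an arrowhead at its first endpoint. -/
def Step.arrowAtStart {G : MixedGraph V} : {a b : V} → G.Step a b → Prop
  | _, _, .fwd _ => False
  | _, _, .bwd _ => True
  | _, _, .bi _ => True

/-- Paths (possibly self-intersecting) in a mixed graph. -/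
inductive Walk (G : MixedGraph V) : V → V → Type _
  | nil {a : V} : G.Walk a a
  | cons {a b c : V} : G.Step a b → G.Walk b c → G.Walk a c

namespace Walk

variable {G : MixedGraph V}

def length : {a b : V} → G.Walk a b → ℕ
  | _, _, .nil => 0
  | _, _, .cons _ w => w.length + 1

def verts : {a b : V} → G.Walk a b → List V
  | a, _, .nil => [a]
  | a, _, .cons _ w => a :: w.verts

/-- The intermediate vertices of a walk. -/
def interm {a b : V} (w : G.Walk a b) : List V := w.verts.tail.dropLast

def append : {a b c : V} → G.Walk a b → G.Walk b c → G.Walk a c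
  | _, _, _, .nil, w' => w'
  | _, _, _, .cons s w, w' => .cons s (w.append w')

/-- Every intermediate vertex of the walk is a collider. -/
def IsPureCollider : {a b : V} → G.Walk a b → Prop
  | _, _, .nil => True
  | _, _, .cons _ .nil => True
  | _, _, .cons s (.cons t w) =>
      s.arrowAtEnd ∧ t.arrowAtStart ∧ (Walk.cons t w).IsPureCollider

/-- The walk is m-connecting given `C`: every non-collider on it is outside `C`
and every collider on it is in `C`. -/
def IsMConnecting (C : Set V) : {a b : V} → G.Walk a b → Prop
  | _, _, .nil => True
  | _, _, .cons _ .nil => True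
  | _, _, .cons (b := m) s (.cons t w) =>
      ((s.arrowAtEnd ∧ t.arrowAtStart) ↔ m ∈ C) ∧ (Walk.cons t w).IsMConnecting C

end Walk

variable (G : MixedGraph V)

/-- `A` and `B` are m-separated given `C`: no m-connecting walk given `C`
between a vertex of `A` and a vertex of `B`. -/
def MSep (A B C : Set V) : Prop :=
  ∀ a ∈ A, ∀ b ∈ B, ∀ w : G.Walk a b, ¬ w.IsMConnecting C

/-- `u` and `v` are joined by a pure-collider path (with at least one edge). -/
def ColliderConn (u v : V) : Prop :=
  ∃ w : G.Walk u v, 0 < w.length ∧ w.IsPureCollider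

/-- Vertices connected to `S` by a (possibly empty) path of bi-directed edges. -/
def district (S : Set V) : Set V :=
  {v | ∃ s ∈ S, Relation.ReflTransGen G.bi s v}

/-- Children of vertices in `S`. -/
def ch (S : Set V) : Set V := {v | ∃ a ∈ S, G.dir a v}

/-- Ancestors of `S` (including `S` itself). -/
def an (S : Set V) : Set V :=
  {v | ∃ s ∈ S, Relation.ReflTransGen G.dir v s}

/-- The subgraph induced by `W`: edges with both endpoints in `W`. -/
def induce (W : Set V) : MixedGraph V where
  dir a b := G.dir a b ∧ a ∈ W ∧ b ∈ W
  bi a b := G.bi a b ∧ a ∈ W ∧ b ∈ W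
  bi_symm h := ⟨G.bi_symm h.1, h.2.2, h.2.1⟩

/-- Separation in an undirected graph with adjacency `adj`: every path between
`A` and `B` intersects `C`, i.e. `B` is not reachable from `A` avoiding `C`. -/
def UndirSep (adj : V → V → Prop) (A B C : Set V) : Prop :=
  ∀ a ∈ A, ∀ b ∈ B, ¬ Relation.ReflTransGen (fun x y => adj x y ∧ y ∉ C) a b

inductive EdgeKind | fwd | bwd | bi
deriving DecidableEq

def Step.kind {G : MixedGraph V} : {a b : V} → G.Step a b → EdgeKind
  | _, _, .fwd _ => .fwd
  | _, _, .bwd _ => .bwd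
  | _, _, .bi _ => .bi

def Walk.kinds {G : MixedGraph V} : {a b : V} → G.Walk a b → List EdgeKind
  | _, _, .nil => []
  | _, _, .cons s w => s.kind :: w.kinds

end MixedGraph

section Aux

namespace MixedGraph

variable {V : Type*} {G : MixedGraph V}

/-- Nonempty walk whose first step has an arrowhead at its start. -/
def Walk.HeadArrow : {a b : V} → G.Walk a b → Prop
  | _, _, .nil => False
  | _, _, .cons s _ => s.arrowAtStart

/-- If nonempty, first step has an arrowhead at its start. -/
def Walk.HeadOK : {a b : V} → G.Walk a b → Prop
  | _, _, .nil => True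
  | _, _, .cons s _ => s.arrowAtStart

/-- If nonempty, last step has an arrowhead at its end. -/
def Walk.LastEnd : {a b : V} → G.Walk a b → Prop
  | _, _, .nil => True
  | _, _, .cons s .nil => s.arrowAtEnd
  | _, _, .cons _ (.cons t w) => (Walk.cons t w).LastEnd

/-- All steps are bi-directed. -/
def Walk.AllBi : {a b : V} → G.Walk a b → Prop
  | _, _, .nil => True
  | _, _, .cons s w => (s.arrowAtEnd ∧ s.arrowAtStart) ∧ w.AllBi

/-- All intermediate vertices lie in `C`. -/
def Walk.AllInterC (C : Set V) : {a b : V} → G.Walk a b → Prop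
  | _, _, .nil => True
  | _, _, .cons _ .nil => True
  | _, _, .cons (b := m) _ (.cons t w) => m ∈ C ∧ (Walk.cons t w).AllInterC C

lemma mem_district_of_mem {S : Set V} {x : V} (h : x ∈ S) : x ∈ G.district S :=
  ⟨x, h, Relation.ReflTransGen.refl⟩

lemma district_tail {S : Set V} {x y : V} (h : x ∈ G.district S) (hb : G.bi x y) :
    y ∈ G.district S := by
  obtain ⟨s, hs, hr⟩ := h
  exact ⟨s, hs, hr.tail hb⟩

lemma pure_cons_of {a b c : V} (w : G.Walk b c) (s : G.Step a b) (hE : s.arrowAtEnd)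
    (hH : w.HeadOK) (hp : w.IsPureCollider) : (Walk.cons s w).IsPureCollider := by
  cases w with
  | nil => trivial
  | cons t w' => exact ⟨hE, hH, hp⟩

lemma allBi_headOK {a b : V} (w : G.Walk a b) (h : w.AllBi) : w.HeadOK := by
  cases w with
  | nil => trivial
  | cons s w' => exact h.1.2

lemma allBi_pure {a b : V} (w : G.Walk a b) (h : w.AllBi) : w.IsPureCollider := by
  induction w with
  | nil => trivial
  | cons s w' ih => exact pure_cons_of w' s h.1.1 (allBi_headOK w' h.2) (ih h.2)

lemma allBi_lastEnd {a b : V} (w : G.Walk a b) (h : w.AllBi) : w.LastEnd := by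
  induction w with
  | nil => trivial
  | cons s w' ih =>
    cases w' with
    | nil => exact h.1.1
    | cons t rest => exact ih h.2

lemma lastEnd_cons {a b c : V} (s : G.Step a b) (w : G.Walk b c) (hE : s.arrowAtEnd)
    (hl : w.LastEnd) : (Walk.cons s w).LastEnd := by
  cases w with
  | nil => exact hE
  | cons t rest => exact hl

lemma pure_append_single {a b : V} (w : G.Walk a b) :
    ∀ {c : V} (s : G.Step b c), s.arrowAtStart → w.IsPureCollider → w.LastEnd →
      (w.append (Walk.cons s Walk.nil)).IsPureCollider := by
  induction w with
  | nil => intro c s hS _ _; trivial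
  | cons t w' ih =>
    intro c s hS hp hl
    cases w' with
    | nil => exact ⟨hl, hS, trivial⟩
    | cons t' rest =>
      obtain ⟨h1, h2, h3⟩ := hp
      exact ⟨h1, h2, ih s hS h3 hl⟩

lemma bi_rtg_walk {u v : V} (h : Relation.ReflTransGen G.bi u v) :
    ∃ w : G.Walk u v, w.AllBi := by
  induction h using Relation.ReflTransGen.head_induction_on with
  | refl => exact ⟨Walk.nil, trivial⟩
  | head h' _ ih =>
    obtain ⟨w, hw⟩ := ih
    exact ⟨Walk.cons (Step.bi h') w, ⟨trivial, trivial⟩, hw⟩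

end MixedGraph

end Aux

section Main

namespace MixedGraph

variable {V : Type*} {G : MixedGraph V} {A B : Set V}

lemma edge_case {a m : V} (s : G.Step a m) (hm : m ∈ B)
    (h : a ∈ A ∨ (a ∈ G.district (A ∪ G.ch A) ∧ s.arrowAtStart)) :
    (G.district (A ∪ G.ch A) ∩ G.district (B ∪ G.ch B)).Nonempty := by
  have haDA : a ∈ A → a ∈ G.district (A ∪ G.ch A) := fun ha => mem_district_of_mem (Or.inl ha)
  cases s with
  | fwd hd =>
    rcases h with ha | ⟨_, hs⟩
    · exact ⟨m, mem_district_of_mem (Or.inr ⟨a, ha, hd⟩), mem_district_of_mem (Or.inl hm)⟩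
    · exact hs.elim
  | bwd hd =>
    have hDB : a ∈ G.district (B ∪ G.ch B) := mem_district_of_mem (Or.inr ⟨m, hm, hd⟩)
    rcases h with ha | ⟨hd2, _⟩
    · exact ⟨a, haDA ha, hDB⟩
    · exact ⟨a, hd2, hDB⟩
  | bi hb =>
    have hDB : a ∈ G.district (B ∪ G.ch B) :=
      ⟨m, Or.inl hm, Relation.ReflTransGen.single (G.bi_symm hb)⟩
    rcases h with ha | ⟨hd2, _⟩
    · exact ⟨a, haDA ha, hDB⟩
    · exact ⟨a, hd2, hDB⟩

lemma mconn_to_ne (hAB : Disjoint A B) :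
    ∀ {a b : V} (w : G.Walk a b), w.IsMConnecting ((A ∪ B)ᶜ) → b ∈ B →
      (a ∈ A ∨ (a ∈ G.district (A ∪ G.ch A) ∧ w.HeadArrow)) →
      (G.district (A ∪ G.ch A) ∩ G.district (B ∪ G.ch B)).Nonempty := by
  intro a b w
  induction w with
  | nil =>
    intro _ hb h
    rcases h with ha | ⟨_, hF⟩
    · exact (Set.disjoint_left.mp hAB ha hb).elim
    · exact hF.elim
  | @cons a m b s w' ih =>
    intro hm hb h
    cases w' with
    | nil => exact edge_case s hb h
    | @cons _ m2 _ t rest =>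
      obtain ⟨hiff, htail⟩ := hm
      by_cases hmA : m ∈ A
      · exact ih htail hb (Or.inl hmA)
      by_cases hmB : m ∈ B
      · exact edge_case s hmB h
      · have hmC : m ∈ ((A ∪ B)ᶜ : Set V) := by
          simp only [Set.mem_compl_iff, Set.mem_union]
          tauto
        obtain ⟨hE, hT⟩ := hiff.mpr hmC
        have hmDA : m ∈ G.district (A ∪ G.ch A) := by
          rcases h with ha | ⟨hd2, hS⟩
          · cases s with
            | fwd hd => exact mem_district_of_mem (Or.inr ⟨a, ha, hd⟩)
            | bwd hd => exact hE.elim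
            | bi hb2 => exact district_tail (mem_district_of_mem (Or.inl ha)) hb2
          · cases s with
            | fwd hd => exact hS.elim
            | bwd hd => exact hE.elim
            | bi hb2 => exact district_tail hd2 hb2
        exact ih htail hb (Or.inr ⟨hmDA, hT⟩)

lemma mconn_of_pure :
    ∀ {a b : V} (w : G.Walk a b), w.IsPureCollider → w.AllInterC ((A ∪ B)ᶜ) →
      w.IsMConnecting ((A ∪ B)ᶜ) := by
  intro a b w
  induction w with
  | nil => exact fun _ _ => trivial
  | @cons a m b s w' ih =>
    intro hp hall
    cases w' with
    | nil => trivial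
    | @cons _ m2 _ t rest =>
      obtain ⟨hE, hT, hp'⟩ := hp
      obtain ⟨hmC, hall'⟩ := hall
      exact ⟨iff_of_true ⟨hE, hT⟩ hmC, ih hp' hall'⟩

lemma shorten :
    ∀ {a b : V} (w : G.Walk a b), w.IsPureCollider → ¬ w.AllInterC ((A ∪ B)ᶜ) →
      ∃ x, x ∉ ((A ∪ B)ᶜ : Set V) ∧
        (∃ w1 : G.Walk a x, w1.IsPureCollider ∧ w1.length < w.length ∧
          (w.HeadArrow → w1.HeadArrow)) ∧
        (∃ w2 : G.Walk x b, w2.IsPureCollider ∧ w2.length < w.length) := by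
  intro a b w
  induction w with
  | nil => exact fun _ hn => absurd trivial hn
  | @cons a m b s w' ih =>
    intro hp hn
    cases w' with
    | nil => exact absurd trivial hn
    | @cons _ m2 _ t rest =>
      obtain ⟨hE, hT, hp'⟩ := hp
      by_cases hmC : m ∈ ((A ∪ B)ᶜ : Set V)
      · have hn' : ¬ (Walk.cons t rest).AllInterC ((A ∪ B)ᶜ) := fun h => hn ⟨hmC, h⟩
        obtain ⟨x, hx, ⟨w1, pw1, hl1, hHA⟩, ⟨w2, pw2, hl2⟩⟩ := ih hp' hn'
        refine ⟨x, hx, ⟨Walk.cons s w1, ?_, ?_, fun h => h⟩, ⟨w2, pw2, ?_⟩⟩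
        · have hok : w1.HeadOK := by
            cases w1 with
            | nil => trivial
            | cons s1 w1' => exact hHA hT
          exact pure_cons_of w1 s hE hok pw1
        · exact Nat.succ_lt_succ hl1
        · exact hl2.trans (Nat.lt_succ_self _)
      · refine ⟨m, hmC, ⟨Walk.cons s Walk.nil, trivial, ?_, fun h => h⟩,
          ⟨Walk.cons t rest, hp', Nat.lt_succ_self _⟩⟩
        simp only [Walk.length]
        omega

lemma pure_to_mconn :
    ∀ n : ℕ, ∀ {a b : V}, a ∈ A → b ∈ B → ∀ w : G.Walk a b,
      w.length ≤ n → w.IsPureCollider →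
      ∃ a' ∈ A, ∃ b' ∈ B, ∃ w' : G.Walk a' b', w'.IsMConnecting ((A ∪ B)ᶜ) := by
  intro n
  induction n with
  | zero =>
    intro a b ha hb w hl hp
    by_cases hall : w.AllInterC ((A ∪ B)ᶜ)
    · exact ⟨a, ha, b, hb, w, mconn_of_pure w hp hall⟩
    · obtain ⟨x, -, -, ⟨w2, -, hl2⟩⟩ := shorten w hp hall
      omega
  | succ n ih =>
    intro a b ha hb w hl hp
    by_cases hall : w.AllInterC ((A ∪ B)ᶜ)
    · exact ⟨a, ha, b, hb, w, mconn_of_pure w hp hall⟩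
    · obtain ⟨x, hx, ⟨w1, pw1, hl1, -⟩, ⟨w2, pw2, hl2⟩⟩ := shorten w hp hall
      have hx' : x ∈ A ∪ B := by simp only [Set.mem_compl_iff, not_not] at hx; exact hx
      rcases hx' with hxA | hxB
      · exact ih hxA hb w2 (by omega) pw2
      · exact ih ha hxB w1 (by omega) pw1

lemma construct (h : (G.district (A ∪ G.ch A) ∩ G.district (B ∪ G.ch B)).Nonempty) :
    ∃ a ∈ A, ∃ b ∈ B, ∃ w : G.Walk a b, w.IsPureCollider := by
  obtain ⟨m, ⟨u, hu, hum⟩, ⟨v, hv, hvm⟩⟩ := h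
  have hsym : Symmetric (Relation.ReflTransGen G.bi) :=
    fun x y h => (@Relation.ReflTransGen.stdSymm _ _ ⟨fun x y hxy => G.bi_symm hxy⟩).symm x y h
  have huv : Relation.ReflTransGen G.bi u v := hum.trans (hsym hvm)
  obtain ⟨wb, hwb⟩ := bi_rtg_walk huv
  have step1 : ∃ a ∈ A, ∃ w1 : G.Walk a v, w1.IsPureCollider ∧ w1.LastEnd := by
    rcases hu with huA | ⟨a, ha, hd⟩
    · exact ⟨u, huA, wb, allBi_pure wb hwb, allBi_lastEnd wb hwb⟩
    · exact ⟨a, ha, Walk.cons (Step.fwd hd) wb,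
        pure_cons_of wb _ trivial (allBi_headOK wb hwb) (allBi_pure wb hwb),
        lastEnd_cons _ wb trivial (allBi_lastEnd wb hwb)⟩
  obtain ⟨a, ha, w1, pw1, lw1⟩ := step1
  rcases hv with hvB | ⟨b, hb, hd⟩
  · exact ⟨a, ha, v, hvB, w1, pw1⟩
  · exact ⟨a, ha, b, hb, w1.append (Walk.cons (Step.bwd hd) Walk.nil),
      pure_append_single w1 (Step.bwd hd) trivial pw1 lw1⟩

end MixedGraph

end Main

/-- TFAE: (i) `A ⊥_m B | V \ (A∪B)`; (ii) no pure-collider path between `A` and `B`;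
(iii) `district(A ∪ ch(A)) ∩ district(B ∪ ch(B)) = ∅`. -/
theorem stmt_4 {V : Type*} (G : MixedGraph V) (A B : Set V) (hAB : Disjoint A B) :
    (G.MSep A B (A ∪ B)ᶜ ↔
      ¬ ∃ a ∈ A, ∃ b ∈ B, ∃ w : G.Walk a b, w.IsPureCollider) ∧
    (G.MSep A B (A ∪ B)ᶜ ↔
      G.district (A ∪ G.ch A) ∩ G.district (B ∪ G.ch B) = ∅) := by
  classical
  have I1 : (∃ a ∈ A, ∃ b ∈ B, ∃ w : G.Walk a b, w.IsPureCollider) →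
      ¬ G.MSep A B (A ∪ B)ᶜ := by
    rintro ⟨a, ha, b, hb, w, hw⟩ hms
    obtain ⟨a', ha', b', hb', w', hw'⟩ := MixedGraph.pure_to_mconn w.length ha hb w le_rfl hw
    exact hms a' ha' b' hb' w' hw'
  have I2 : ¬ G.MSep A B (A ∪ B)ᶜ →
      (G.district (A ∪ G.ch A) ∩ G.district (B ∪ G.ch B)).Nonempty := by
    intro h
    unfold MixedGraph.MSep at h
    push_neg at h
    obtain ⟨a, ha, b, hb, w, hw⟩ := h
    exact MixedGraph.mconn_to_ne hAB w hw hb (Or.inl ha)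
  have I3 := @MixedGraph.construct V G A B
  refine ⟨⟨fun hms hex => I1 hex hms, fun hnp => ?_⟩,
    ⟨fun hms => ?_, fun hemp => ?_⟩⟩
  · by_contra hms
    exact hnp (I3 (I2 hms))
  · by_contra hne
    have hne' := Set.nonempty_iff_ne_empty.mpr hne
    exact I1 (I3 hne') hms
  · by_contra hms
    exact Set.nonempty_iff_ne_empty.mp (I2 hms) hemp
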